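/- For n ≥ 2, the smallest Lie subalgebra of Vect_poly(ℝⁿ) containing the space Vect_{≤2}(ℝⁿ) of polynomial vector fields of degree at most 2 is Vect_poly(ℝⁿ) itself; that is, the Lie subalgebra generated by all polynomial vector fields of degree ≤ 2 equals the whole Lie algebra of polynomial vector fields. -/

import Mathlib

open MvPolynomial

/-- Polynomial vector fields on ℝⁿ. -/
abbrev VF (n : ℕ) := Fin n → MvPolynomial (Fin n) ℝ

/-- The Lie bracket of polynomial vector fields:
`[X,Y]ⁱ = ∑_j (X^j ∂_j Yⁱ − Y^j ∂_j Xⁱ)`. -/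
noncomputable def vbracket {n : ℕ} (Xv Yv : VF n) : VF n :=
  fun i => ∑ j, (Xv j * pderiv j (Yv i) - Yv j * pderiv j (Xv i))

lemma bracket_single {n : ℕ} (k i : Fin n) (f g : MvPolynomial (Fin n) ℝ) :
    vbracket (Pi.single k f) (Pi.single i g)
      = Pi.single i (f * pderiv k g) - Pi.single k (g * pderiv i f) := by
  funext l
  simp only [vbracket, Pi.sub_apply, Pi.single_apply, ite_mul, zero_mul]
  rw [Finset.sum_sub_distrib, Finset.sum_ite_eq' Finset.univ k,
      Finset.sum_ite_eq' Finset.univ i]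
  simp only [Finset.mem_univ, if_true]
  split_ifs <;> simp

section helpers
variable {n : ℕ} {S : Submodule ℝ (VF n)}

lemma single_smul' (c : ℝ) (i : Fin n) (p : MvPolynomial (Fin n) ℝ) :
    (Pi.single i (c • p) : VF n) = c • (Pi.single i p : VF n) := by
  funext l; rcases eq_or_ne l i with rfl | hl
  · simp
  · simp [Pi.single_eq_of_ne hl]

lemma single_sub' (i : Fin n) (A B : MvPolynomial (Fin n) ℝ) :
    (Pi.single i (A - B) : VF n) = Pi.single i A - Pi.single i B := by
  funext l; rcases eq_or_ne l i with rfl | hl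
  · simp
  · simp [Pi.single_eq_of_ne hl]

lemma smul_single_mem {c : ℝ} (hc : c ≠ 0) {i : Fin n} {p : MvPolynomial (Fin n) ℝ}
    (h : Pi.single i (c • p) ∈ S) : Pi.single i p ∈ S := by
  rw [single_smul'] at h
  have := S.smul_mem c⁻¹ h
  rwa [smul_smul, inv_mul_cancel₀ hc, one_smul] at this

lemma step (hbr : ∀ Xv ∈ S, ∀ Yv ∈ S, vbracket Xv Yv ∈ S)
    (k i : Fin n) (f g : MvPolynomial (Fin n) ℝ)
    (h1 : Pi.single k f ∈ S) (h2 : Pi.single i g ∈ S)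
    (h3 : Pi.single k (g * pderiv i f) ∈ S) :
    Pi.single i (f * pderiv k g) ∈ S := by
  have hb := hbr _ h1 _ h2
  rw [bracket_single] at hb
  have := S.add_mem hb h3
  simpa using this

lemma deg2mem (hdeg : ∀ Xv : VF n, (∀ i, (Xv i).totalDegree ≤ 2) → Xv ∈ S)
    (d : Fin n →₀ ℕ) (i : Fin n) (hd : (∑ k, d k) ≤ 2) (c : ℝ) :
    Pi.single i (monomial d c) ∈ S := by
  apply hdeg
  intro l
  rcases eq_or_ne l i with rfl | hl
  · rw [Pi.single_eq_same]
    by_cases hc : c = 0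
    · simp [hc]
    · rw [totalDegree_monomial d hc, Finsupp.sum_fintype d _ (fun _ => rfl)]
      exact hd
  · simp [Pi.single_eq_of_ne hl]

lemma sum_single_fin (k : Fin n) (a : ℕ) : (∑ j, Finsupp.single k a j) = a := by
  simp [Finsupp.single_apply, Finset.sum_ite_eq]

lemma sum_sub_single (d : Fin n →₀ ℕ) (p : Fin n) (hp : 1 ≤ d p) :
    (∑ j, ((d - Finsupp.single p 1 : Fin n →₀ ℕ) j)) = (∑ j, d j) - 1 := by
  have h1 : ∀ j, Finsupp.single p 1 j ≤ d j := by
    intro j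
    rcases eq_or_ne p j with rfl | h
    · simpa using hp
    · simp [Finsupp.single_apply, h]
  have h2 : (∑ j, (((d - Finsupp.single p 1 : Fin n →₀ ℕ) j) + Finsupp.single p 1 j)) = ∑ j, d j := by
    refine Finset.sum_congr rfl fun j _ => ?_
    rw [Finsupp.tsub_apply]
    exact Nat.sub_add_cancel (h1 j)
  rw [Finset.sum_add_distrib, sum_single_fin] at h2
  omega

/-- KEY1: generation when there are variables `k, p ≠ i` (possibly equal) available. -/
lemma key1 (hbr : ∀ Xv ∈ S, ∀ Yv ∈ S, vbracket Xv Yv ∈ S)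
    (hdeg : ∀ Xv : VF n, (∀ i, (Xv i).totalDegree ≤ 2) → Xv ∈ S) {D : ℕ}
    (ih : ∀ d : Fin n →₀ ℕ, ∀ i : Fin n, (∑ k, d k) ≤ D → Pi.single i (monomial d (1:ℝ)) ∈ S)
    (d : Fin n →₀ ℕ) (i k p : Fin n) (hdeq : (∑ j, d j) = D + 1)
    (hki : k ≠ i) (hpi : p ≠ i) (hp : 1 ≤ d p) (hk : 1 ≤ ((d - Finsupp.single p 1 : Fin n →₀ ℕ) k)) :
    Pi.single i (monomial d (1:ℝ)) ∈ S := by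
  set f : MvPolynomial (Fin n) ℝ := monomial (Finsupp.single k 1 + Finsupp.single p 1) 1 with hf
  set g : MvPolynomial (Fin n) ℝ := monomial (d - Finsupp.single p 1) 1 with hg
  have hk' : 1 ≤ d k - (if p = k then 1 else 0) := by
    simpa [Finsupp.tsub_apply, Finsupp.single_apply] using hk
  have hfS : Pi.single k f ∈ S := by
    apply deg2mem hdeg
    simp [Finsupp.add_apply, Finsupp.single_apply, Finset.sum_add_distrib, Finset.sum_ite_eq]
  have hgS : Pi.single i g ∈ S := by
    apply ih
    rw [sum_sub_single d p hp, hdeq]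
    omega
  have h3 : Pi.single k (g * pderiv i f) ∈ S := by
    have hzero : pderiv i f = 0 := by
      rw [hf, pderiv_monomial]
      simp [Finsupp.add_apply, Finsupp.single_apply, hki, hpi]
    rw [hzero, mul_zero, Pi.single_zero]
    exact S.zero_mem
  have hmain := step hbr k i f g hfS hgS h3
  have hcomp : f * pderiv k g
      = (((d - Finsupp.single p 1 : Fin n →₀ ℕ) k : ℝ)) • monomial d (1:ℝ) := by
    have hexp : (Finsupp.single k 1 + Finsupp.single p 1)
        + (d - Finsupp.single p 1 - Finsupp.single k 1) = d := by
      ext j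
      simp only [Finsupp.add_apply, Finsupp.tsub_apply, Finsupp.single_apply]
      rcases eq_or_ne p j with h1 | h1 <;> rcases eq_or_ne k j with h2 | h2 <;>
        simp_all <;> omega
    rw [hg, pderiv_monomial, hf, monomial_mul, smul_monomial, hexp]
    simp
  rw [hcomp] at hmain
  refine smul_single_mem ?_ hmain
  have : 0 < ((d - Finsupp.single p 1 : Fin n →₀ ℕ) k) := hk
  positivity
end helpers

section helpers2
variable {n : ℕ} {S : Submodule ℝ (VF n)}

/-- KEY2: monomials of the form `x_i^a x_k` on component `i`. -/
lemma key2 (hbr : ∀ Xv ∈ S, ∀ Yv ∈ S, vbracket Xv Yv ∈ S)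
    (hdeg : ∀ Xv : VF n, (∀ i, (Xv i).totalDegree ≤ 2) → Xv ∈ S) {D : ℕ}
    (ih : ∀ d : Fin n →₀ ℕ, ∀ i : Fin n, (∑ k, d k) ≤ D → Pi.single i (monomial d (1:ℝ)) ∈ S)
    (i k : Fin n) (hki : k ≠ i) (a : ℕ) (ha : 2 ≤ a) (hD : a ≤ D) :
    Pi.single i (monomial (Finsupp.single i a + Finsupp.single k 1) (1:ℝ)) ∈ S := by
  set f : MvPolynomial (Fin n) ℝ := monomial (Finsupp.single i 1 + Finsupp.single k 1) 1 with hf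
  set g : MvPolynomial (Fin n) ℝ := monomial (Finsupp.single i a) 1 with hg
  have hfS : Pi.single i f ∈ S := by
    apply deg2mem hdeg
    simp [Finsupp.add_apply, Finsupp.single_apply, Finset.sum_add_distrib, Finset.sum_ite_eq]
  have hgS : Pi.single i g ∈ S := by
    apply ih
    rw [sum_single_fin]; exact hD
  have hb := hbr _ hfS _ hgS
  rw [bracket_single, ← single_sub'] at hb
  have hA : f * pderiv i g = (a:ℝ) • monomial (Finsupp.single i a + Finsupp.single k 1) 1 := by
    have hexp : (Finsupp.single i 1 + Finsupp.single k 1)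
        + (Finsupp.single i a - Finsupp.single i 1)
        = Finsupp.single i a + Finsupp.single k 1 := by
      ext j
      simp only [Finsupp.add_apply, Finsupp.tsub_apply, Finsupp.single_apply]
      rcases eq_or_ne i j with h1 | h1 <;> rcases eq_or_ne k j with h2 | h2 <;>
        simp_all <;> omega
    rw [hg, pderiv_monomial, hf, monomial_mul, smul_monomial, hexp]
    simp
  have hB : g * pderiv i f = monomial (Finsupp.single i a + Finsupp.single k 1) 1 := by
    have hexp : Finsupp.single i a
        + (Finsupp.single i 1 + Finsupp.single k 1 - Finsupp.single i 1)
        = Finsupp.single i a + Finsupp.single k 1 := by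
      ext j
      simp only [Finsupp.add_apply, Finsupp.tsub_apply, Finsupp.single_apply]
      rcases eq_or_ne i j with h1 | h1 <;> rcases eq_or_ne k j with h2 | h2 <;>
        simp_all <;> omega
    rw [hf, pderiv_monomial, hg, monomial_mul, hexp]
    simp [Finsupp.add_apply, Finsupp.single_apply, hki]
  rw [hA, hB] at hb
  have hsub : (a:ℝ) • (monomial (Finsupp.single i a + Finsupp.single k 1) (1:ℝ))
      - monomial (Finsupp.single i a + Finsupp.single k 1) (1:ℝ)
      = ((a:ℝ) - 1) • monomial (Finsupp.single i a + Finsupp.single k 1) (1:ℝ) := by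
    rw [sub_smul, one_smul]
  rw [hsub] at hb
  refine smul_single_mem ?_ hb
  have : (2:ℝ) ≤ (a:ℝ) := by exact_mod_cast ha
  linarith


set_option maxHeartbeats 1000000 in
lemma key3 {n : ℕ} {S : Submodule ℝ (VF n)} (hbr : ∀ Xv ∈ S, ∀ Yv ∈ S, vbracket Xv Yv ∈ S)
    (hdeg : ∀ Xv : VF n, (∀ i, (Xv i).totalDegree ≤ 2) → Xv ∈ S) {D : ℕ}
    (ih : ∀ d : Fin n →₀ ℕ, ∀ i : Fin n, (∑ k, d k) ≤ D → Pi.single i (monomial d (1:ℝ)) ∈ S)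
    (hD : 2 ≤ D) (i k : Fin n) (hki : k ≠ i) :
    Pi.single i (monomial (Finsupp.single i (D+1)) (1:ℝ)) ∈ S := by
  set f : MvPolynomial (Fin n) ℝ := monomial (Finsupp.single i 2) 1 with hf
  set g : MvPolynomial (Fin n) ℝ :=
    monomial (Finsupp.single i (D-1) + Finsupp.single k 1) 1 with hg
  have hfS : Pi.single k f ∈ S := by
    apply deg2mem hdeg
    rw [sum_single_fin]
  have hgS : Pi.single i g ∈ S := by
    apply ih
    simp only [Finsupp.add_apply, Finsupp.single_apply, Finset.sum_add_distrib,
      Finset.sum_ite_eq, Finset.mem_univ, if_true]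
    omega
  have hb := hbr _ hfS _ hgS
  rw [bracket_single] at hb
  have hA : f * pderiv k g = monomial (Finsupp.single i (D+1)) 1 := by
    have hexp : Finsupp.single i 2
        + (Finsupp.single i (D-1) + Finsupp.single k 1 - Finsupp.single k 1)
        = Finsupp.single i (D+1) := by
      ext j
      simp only [Finsupp.add_apply, Finsupp.tsub_apply, Finsupp.single_apply]
      rcases eq_or_ne i j with h1 | h1 <;> rcases eq_or_ne k j with h2 | h2 <;>
        simp_all <;> omega
    rw [hg, pderiv_monomial, hf, monomial_mul, hexp]
    simp [Finsupp.add_apply, Finsupp.single_apply, hki, Ne.symm hki]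
  have hB : g * pderiv i f
      = (2:ℝ) • monomial (Finsupp.single i D + Finsupp.single k 1) 1 := by
    have hexp : (Finsupp.single i (D-1) + Finsupp.single k 1)
        + (Finsupp.single i 2 - Finsupp.single i 1)
        = Finsupp.single i D + Finsupp.single k 1 := by
      ext j
      simp only [Finsupp.add_apply, Finsupp.tsub_apply, Finsupp.single_apply]
      rcases eq_or_ne i j with h1 | h1 <;> rcases eq_or_ne k j with h2 | h2 <;>
        simp_all <;> omega
    rw [hf, pderiv_monomial, hg, monomial_mul, smul_monomial, hexp]
    simp [Finsupp.single_apply]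
  have hleft : Pi.single k (monomial (Finsupp.single i D + Finsupp.single k 1) (1:ℝ)) ∈ S := by
    refine key1 hbr hdeg ih (Finsupp.single i D + Finsupp.single k 1) k i i ?_ (Ne.symm hki) (Ne.symm hki) ?_ ?_
    · simp only [Finsupp.add_apply, Finsupp.single_apply, Finset.sum_add_distrib,
        Finset.sum_ite_eq, Finset.mem_univ, if_true]
    · simp only [Finsupp.add_apply, Finsupp.single_apply, if_pos rfl, if_neg hki, if_true]
      omega
    · simp only [Finsupp.tsub_apply, Finsupp.add_apply, Finsupp.single_apply, if_pos rfl,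
        if_neg hki, if_true]
      omega
  have hleft2 : Pi.single k (g * pderiv i f) ∈ S := by
    rw [hB, single_smul']
    exact S.smul_mem _ hleft
  have hfin := S.add_mem hb hleft2
  rw [sub_add_cancel, hA] at hfin
  exact hfin

/-- For `n ≥ 2`, the Lie subalgebra of `Vect_poly(ℝⁿ)` generated by the polynomial
vector fields of degree at most 2 is the whole Lie algebra: every Lie subalgebra
containing `Vect_{≤2}(ℝⁿ)` equals `Vect_poly(ℝⁿ)`. -/
theorem lie_generated_by_degree_le_two (n : ℕ) (h2 : 2 ≤ n) :
    ∀ S : Submodule ℝ (VF n),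
      (∀ Xv ∈ S, ∀ Yv ∈ S, vbracket Xv Yv ∈ S) →
      (∀ Xv : VF n, (∀ i, (Xv i).totalDegree ≤ 2) → Xv ∈ S) →
      S = ⊤ := by
  intro S hbr hdeg
  have key : ∀ D : ℕ, ∀ d : Fin n →₀ ℕ, ∀ i : Fin n,
      (∑ k, d k) ≤ D → Pi.single i (monomial d (1:ℝ)) ∈ S := by
    intro D
    induction D with
    | zero =>
      intro d i hd
      exact deg2mem hdeg d i (le_trans hd (by norm_num)) 1
    | succ D ih =>
      intro d i hd
      rcases Nat.lt_or_ge (∑ k, d k) (D+1) with hlt | hge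
      · exact ih d i (Nat.lt_succ_iff.mp hlt)
      have hdeq : (∑ k, d k) = D + 1 := le_antisymm hd hge
      by_cases hD2 : D + 1 ≤ 2
      · exact deg2mem hdeg d i (hdeq ▸ hD2) 1
      push_neg at hD2
      have hD : 2 ≤ D := by omega
      by_cases hc1 : ∃ k, k ≠ i ∧ 2 ≤ d k
      · obtain ⟨k, hki, hk2⟩ := hc1
        refine key1 hbr hdeg ih d i k k hdeq hki hki (by omega) ?_
        have hvv : ((d - Finsupp.single k 1 : Fin n →₀ ℕ) k) = d k - 1 := by
          simp [Finsupp.tsub_apply, Finsupp.single_apply]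
        omega
      by_cases hc2 : ∃ k p, k ≠ i ∧ p ≠ i ∧ k ≠ p ∧ 1 ≤ d k ∧ 1 ≤ d p
      · obtain ⟨k, p, hki, hpi, hkp, hk1, hp1⟩ := hc2
        refine key1 hbr hdeg ih d i k p hdeq hki hpi hp1 ?_
        have hvv : ((d - Finsupp.single p 1 : Fin n →₀ ℕ) k) = d k := by
          simp [Finsupp.tsub_apply, Finsupp.single_apply, Ne.symm hkp]
        omega
      push_neg at hc1 hc2
      by_cases hc3 : ∃ k, k ≠ i ∧ 1 ≤ d k
      · obtain ⟨k, hki, hk1⟩ := hc3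
        have hz : ∀ j, j ≠ i → j ≠ k → d j = 0 := by
          intro j hji hjk
          by_contra hj
          have := hc2 j k hji hki hjk (by omega)
          omega
        have hpt : ∀ j, d j = (if j = i then d i else 0) + (if j = k then 1 else 0) := by
          intro j
          rcases eq_or_ne j i with rfl | hji
          · simp [Ne.symm hki]
          · rcases eq_or_ne j k with rfl | hjk
            · have := hc1 j hji
              simp [hji]
              omega
            · simp [hji, hjk, hz j hji hjk]
        have hsum : d i + 1 = D + 1 := by
          rw [← hdeq, Finset.sum_congr rfl (fun j _ => hpt j), Finset.sum_add_distrib,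
            Finset.sum_ite_eq', Finset.sum_ite_eq']
          simp
        have hdi : d i = D := by omega
        have hdd : d = Finsupp.single i D + Finsupp.single k 1 := by
          ext j
          rw [hpt j, hdi]
          simp only [Finsupp.add_apply, Finsupp.single_apply]
          simp [eq_comm]
        rw [hdd]
        exact key2 hbr hdeg ih i k hki D hD le_rfl
      · push_neg at hc3
        have hz : ∀ j, j ≠ i → d j = 0 := by
          intro j hji
          have := hc3 j hji
          omega
        have hpt : ∀ j, d j = (if j = i then d i else 0) := by
          intro j
          rcases eq_or_ne j i with rfl | hji
          · simp
          · simp [hji, hz j hji]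
        have hsum : d i = D + 1 := by
          rw [← hdeq, Finset.sum_congr rfl (fun j _ => hpt j), Finset.sum_ite_eq']
          simp
        have hdd : d = Finsupp.single i (D + 1) := by
          ext j
          rw [hpt j, hsum]
          simp only [Finsupp.single_apply, eq_comm] <;> split_ifs <;> omega
        obtain ⟨k, hki⟩ : ∃ k : Fin n, k ≠ i :=
          Fintype.exists_ne_of_one_lt_card (by simp; omega) i
        rw [hdd]
        exact key3 hbr hdeg ih hD i k hki
  -- conclude
  rw [eq_top_iff]
  intro X _
  rw [← Finset.univ_sum_single X]
  refine S.sum_mem fun i _ => ?_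
  rw [← support_sum_monomial_coeff (X i)]
  have hmap : (Pi.single i (∑ v ∈ (X i).support, monomial v (coeff v (X i))) : VF n)
      = ∑ v ∈ (X i).support, Pi.single i (monomial v (coeff v (X i))) := by
    exact map_sum (LinearMap.single ℝ (fun _ => MvPolynomial (Fin n) ℝ) i) _ _
  rw [hmap]
  refine S.sum_mem fun v _ => ?_
  have : (monomial v) (coeff v (X i)) = coeff v (X i) • monomial v (1:ℝ) := by
    simp [smul_monomial]
  rw [this, single_smul']
  exact S.smul_mem _ (key (∑ k, v k) v i le_rfl)
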